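/- Let H be a real Hilbert space, Ω ⊆ H a nonempty closed convex set, and T : H → H an η-relaxed cutter with η ∈ (0,2) and Fix T ∩ Ω ≠ ∅. Then the composition P_Ω ∘ T (metric projection onto Ω after T) is strongly quasi-nonexpansive with respect to Fix T ∩ Ω, and in particular is asymptotically regular: for any x⁰, the sequence x^{k+1} = P_Ω T(x^k) satisfies ‖P_Ω T(x^k) − x^k‖ → 0. -/

import Mathlib

open RealInnerProductSpace Filter

theorem projected_relaxed_cutter_sqne_and_asymptotically_regular
    (H : Type*) [NormedAddCommGroup H] [InnerProductSpace ℝ H] [CompleteSpace H]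
    (Ω : Set H) (hΩne : Ω.Nonempty) (hΩclosed : IsClosed Ω) (hΩconvex : Convex ℝ Ω)
    (T : H → H) (η : ℝ) (hη : η ∈ Set.Ioo (0 : ℝ) 2)
    (hT : ∀ x, ∀ z ∈ Function.fixedPoints T,
      η * ⟪T x - x, z - x⟫ ≥ ‖T x - x‖ ^ 2)
    (hfix : (Function.fixedPoints T ∩ Ω).Nonempty)
    (P : H → H)
    (hP : ∀ x, P x ∈ Ω ∧ ∀ y ∈ Ω, ⟪x - P x, y - P x⟫ ≤ 0) :
    (∃ β > (0 : ℝ), ∀ x, ∀ z ∈ Function.fixedPoints T ∩ Ω,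
        ‖P (T x) - z‖ ^ 2 ≤ ‖x - z‖ ^ 2 - β * ‖P (T x) - x‖ ^ 2) ∧
      ∀ x : ℕ → H, (∀ k, x (k + 1) = P (T (x k))) →
        Tendsto (fun k => ‖P (T (x k)) - x k‖) atTop (nhds 0) := by
  obtain ⟨hη0, hη2⟩ := hη
  set α : ℝ := 2 / η - 1 with hαdef
  have hαpos : 0 < α := by
    have : 1 < 2 / η := (one_lt_div hη0).mpr hη2
    simp only [hαdef]; linarith
  set β : ℝ := min α 1 / 2 with hβdef
  have hβpos : 0 < β := by
    have := lt_min hαpos one_pos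
    simp only [hβdef]; linarith
  have hb1 : 2 * β ≤ α := by
    have h := min_le_left α 1
    have e : 2 * β = min α 1 := by rw [hβdef]; ring
    linarith
  have hb2 : 2 * β ≤ 1 := by
    have := min_le_right α 1; simp only [hβdef]; linarith
  have key : ∀ x, ∀ z ∈ Function.fixedPoints T ∩ Ω,
      ‖P (T x) - z‖ ^ 2 ≤ ‖x - z‖ ^ 2 - β * ‖P (T x) - x‖ ^ 2 := by
    rintro x z ⟨hzT, hzΩ⟩
    have h1 : η * ⟪T x - x, z - x⟫ ≥ ‖T x - x‖ ^ 2 := hT x z hzT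
    -- T is α-SQNE
    have e1 : ‖T x - z‖ ^ 2
        = ‖T x - x‖ ^ 2 - 2 * ⟪T x - x, z - x⟫ + ‖z - x‖ ^ 2 := by
      rw [← @norm_sub_sq_real, sub_sub_sub_cancel_right]
    have h2 : (2 / η) * ‖T x - x‖ ^ 2 ≤ 2 * ⟪T x - x, z - x⟫ := by
      rw [div_mul_eq_mul_div, div_le_iff₀ hη0]
      nlinarith [h1]
    have hzx : ‖z - x‖ = ‖x - z‖ := norm_sub_rev _ _
    have hTx : ‖T x - z‖ ^ 2 ≤ ‖x - z‖ ^ 2 - α * ‖T x - x‖ ^ 2 := by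
      rw [e1, hzx]
      simp only [hαdef]
      nlinarith [h2]
    -- projection is a cutter
    obtain ⟨hPΩ, hPineq⟩ := hP (T x)
    have h3 : ⟪T x - P (T x), z - P (T x)⟫ ≤ 0 := hPineq z hzΩ
    have e2 : ‖T x - z‖ ^ 2
        = ‖T x - P (T x)‖ ^ 2 - 2 * ⟪T x - P (T x), z - P (T x)⟫
          + ‖z - P (T x)‖ ^ 2 := by
      rw [← @norm_sub_sq_real, sub_sub_sub_cancel_right]
    have hn1 : ‖z - P (T x)‖ = ‖P (T x) - z‖ := norm_sub_rev _ _
    have hn2 : ‖T x - P (T x)‖ = ‖P (T x) - T x‖ := norm_sub_rev _ _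
    rw [hn1, hn2] at e2
    have hP2 : ‖P (T x) - z‖ ^ 2 ≤ ‖T x - z‖ ^ 2 - ‖P (T x) - T x‖ ^ 2 := by
      rw [e2]; linarith
    -- combine
    have htri : ‖P (T x) - x‖ ≤ ‖P (T x) - T x‖ + ‖T x - x‖ :=
      norm_sub_le_norm_sub_add_norm_sub _ _ _
    have hsq : ‖P (T x) - x‖ ^ 2
        ≤ 2 * ‖P (T x) - T x‖ ^ 2 + 2 * ‖T x - x‖ ^ 2 := by
      nlinarith [htri, norm_nonneg (P (T x) - x), norm_nonneg (P (T x) - T x),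
        norm_nonneg (T x - x), sq_nonneg (‖P (T x) - T x‖ - ‖T x - x‖)]
    have hβb : β * ‖P (T x) - x‖ ^ 2
        ≤ ‖P (T x) - T x‖ ^ 2 + α * ‖T x - x‖ ^ 2 := by
      nlinarith [hsq, hβpos.le, hb1, hb2, sq_nonneg ‖T x - x‖,
        sq_nonneg ‖P (T x) - T x‖]
    linarith
  refine ⟨⟨β, hβpos, key⟩, ?_⟩
  intro x hx
  obtain ⟨z, hz⟩ := hfix
  set b : ℕ → ℝ := fun k => ‖P (T (x k)) - x k‖ ^ 2 with hbdef
  have hbnonneg : ∀ k, 0 ≤ b k := fun k => sq_nonneg _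
  have hstep : ∀ k, β * b k ≤ ‖x k - z‖ ^ 2 - ‖x (k + 1) - z‖ ^ 2 := by
    intro k
    have h := key (x k) z hz
    rw [← hx k] at h
    simp only [hbdef]
    rw [← hx k]
    linarith
  have hpartial : ∀ n, ∑ k ∈ Finset.range n, b k ≤ ‖x 0 - z‖ ^ 2 / β := by
    intro n
    rw [le_div_iff₀ hβpos]
    have htel : ∑ k ∈ Finset.range n,
        (‖x k - z‖ ^ 2 - ‖x (k + 1) - z‖ ^ 2)
        = ‖x 0 - z‖ ^ 2 - ‖x n - z‖ ^ 2 :=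
      Finset.sum_range_sub' (fun k => ‖x k - z‖ ^ 2) n
    calc (∑ k ∈ Finset.range n, b k) * β
        = ∑ k ∈ Finset.range n, β * b k := by
          rw [Finset.sum_mul]; exact Finset.sum_congr rfl fun k _ => mul_comm _ _
      _ ≤ ∑ k ∈ Finset.range n, (‖x k - z‖ ^ 2 - ‖x (k + 1) - z‖ ^ 2) :=
          Finset.sum_le_sum fun k _ => hstep k
      _ = ‖x 0 - z‖ ^ 2 - ‖x n - z‖ ^ 2 := htel
      _ ≤ ‖x 0 - z‖ ^ 2 := by nlinarith [sq_nonneg ‖x n - z‖]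
  have hsummable : Summable b := summable_of_sum_range_le hbnonneg hpartial
  have hb0 : Tendsto b atTop (nhds 0) := hsummable.tendsto_atTop_zero
  have hsqrt : Tendsto (fun k => Real.sqrt (b k)) atTop (nhds 0) := by
    have := (Real.continuous_sqrt.tendsto 0).comp hb0
    simpa [Function.comp_def] using this
  have heq : (fun k => ‖P (T (x k)) - x k‖) = fun k => Real.sqrt (b k) := by
    funext k
    simp only [hbdef]
    rw [Real.sqrt_sq (norm_nonneg _)]
  rw [heq]
  exact hsqrt
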